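/- Given n+1 points x₀, ..., xₙ in ℚⁿ with q(xᵢ − xⱼ) = 1 for all i ≠ j, where q is a rational quadratic form, the form q is rationally equivalent to Sₙ(x) = Σ_{i≤j} xᵢxⱼ. -/

import Mathlib

open Finset


/-- The quadratic form `Sₙ(x) = ∑_{1 ≤ i ≤ j ≤ n} xᵢ xⱼ` as a function. -/
def Sfun (n : ℕ) (x : Fin n → ℚ) : ℚ := ∑ i, ∑ j ∈ Finset.Ici i, x i * x j

lemma two_mul_Sfun {n : ℕ} (a : Fin n → ℚ) :
    2 * Sfun n a = (∑ i, a i)^2 + ∑ i, (a i)^2 := by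
  have hswap : ∑ i, ∑ j ∈ Iio i, a i * a j = ∑ i, ∑ j ∈ Ioi i, a i * a j := by
    rw [Finset.sum_comm' (t' := (univ : Finset (Fin n))) (s' := fun j => Ioi j)
      (by intro i j; simp [and_comm])]
    simp_rw [mul_comm]
  have hsplit : ∀ i : Fin n, ∑ j, a i * a j
      = (∑ j ∈ Iio i, a i * a j) + ∑ j ∈ Ici i, a i * a j := by
    intro i
    rw [← Finset.sum_union (by simp [Finset.disjoint_left])]
    congr 1
    ext j
    simp [lt_or_ge]
  have hIci : ∀ i : Fin n, ∑ j ∈ Ici i, a i * a j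
      = a i * a i + ∑ j ∈ Ioi i, a i * a j := by
    intro i
    rw [Ici_eq_cons_Ioi, Finset.sum_cons]
  have hsq : (∑ i, a i)^2 = ∑ i, ∑ j, a i * a j := by
    rw [sq, Finset.sum_mul_sum]
  rw [Sfun, hsq]
  simp_rw [hsplit, Finset.sum_add_distrib, hswap, hIci]
  simp_rw [Finset.sum_add_distrib, sq]
  ring

lemma Sfun_eq_zero {n : ℕ} (a : Fin n → ℚ) (h : Sfun n a = 0) : a = 0 := by
  have h2 := two_mul_Sfun a
  rw [h, mul_zero] at h2
  have hsum : ∑ i, (a i)^2 = 0 := by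
    nlinarith [sq_nonneg (∑ i, a i), Finset.sum_nonneg (fun i  (_ : i ∈ univ) => sq_nonneg (a i))]
  funext i
  have := (Finset.sum_eq_zero_iff_of_nonneg (fun i _ => sq_nonneg (a i))).mp hsum i (mem_univ i)
  simpa using pow_eq_zero_iff (n := 2) (by norm_num) |>.mp this

/-- If `n + 1` points of `ℚⁿ` are pairwise at unit `q`-distance, then `q` is
rationally equivalent to `Sₙ`. -/
theorem stmt_10 {n : ℕ} (q : QuadraticForm ℚ (Fin n → ℚ)) (hq : q.PosDef)
    (x : Fin (n + 1) → (Fin n → ℚ)) (hx : ∀ i j, i ≠ j → q (x i - x j) = 1) :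
    ∃ T : (Fin n → ℚ) ≃ₗ[ℚ] (Fin n → ℚ), ∀ z, q z = Sfun n (T z) := by
  classical
  set B := QuadraticMap.associatedHom ℚ q with hBdef
  set v : Fin n → (Fin n → ℚ) := fun i => x i.succ - x 0 with hvdef
  have hq1 : ∀ i, q (v i) = 1 := fun i => hx i.succ 0 (Fin.succ_ne_zero i)
  have hpolar : ∀ i j, i ≠ j → QuadraticMap.polar q (v i) (v j) = 1 := by
    intro i j hij
    have hsub : q (v i - v j) = 1 := by
      have hv : v i - v j = x i.succ - x j.succ := by
        simp only [hvdef]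
        abel
      rw [hv]
      exact hx _ _ ((Fin.succ_injective n).ne hij)
    have hexp : q (v i - v j) = q (v i) + q (v j) - QuadraticMap.polar q (v i) (v j) := by
      have e1 : QuadraticMap.polar q (v i) (-(v j))
          = q (v i + -(v j)) - q (v i) - q (-(v j)) := rfl
      rw [QuadraticMap.polar_neg_right] at e1
      have e2 : q (-(v j)) = q (v j) := QuadraticMap.map_neg q (v j)
      rw [sub_eq_add_neg]
      linarith [e1, e2]
    rw [hq1, hq1, hsub] at hexp
    linarith
  have hBij : ∀ i j, B (v i) (v j) = if i = j then 1 else 1/2 := by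
    intro i j
    have h2 := LinearMap.congr_fun
      (LinearMap.congr_fun (QuadraticMap.two_nsmul_associated ℚ q) (v i)) (v j)
    simp only [LinearMap.smul_apply, QuadraticMap.polarBilin_apply_apply, smul_eq_mul,
      nsmul_eq_mul, Nat.cast_ofNat] at h2
    by_cases hij : i = j
    · subst hij
      simp only [if_pos rfl]
      have h3 := QuadraticMap.associated_eq_self_apply ℚ q (v i)
      rw [hq1] at h3
      exact h3
    · rw [if_neg hij]
      rw [hpolar i j hij] at h2
      rw [hBdef]
      linarith
  have key : ∀ a : Fin n → ℚ, q (∑ i, a i • v i) = Sfun n a := by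
    intro a
    have hB : q (∑ i, a i • v i) = B (∑ i, a i • v i) (∑ j, a j • v j) :=
      (QuadraticMap.associated_eq_self_apply ℚ q _).symm
    have hexp : B (∑ i, a i • v i) (∑ j, a j • v j)
        = ∑ i, a i * ∑ j, a j * (if i = j then (1:ℚ) else 1/2) := by
      simp only [map_sum, LinearMap.sum_apply, LinearMap.map_smul, LinearMap.smul_apply,
        smul_eq_mul, hBij]
      rw [Finset.sum_comm]
      simp_rw [Finset.mul_sum]
    have inner : ∀ i, ∑ j, a j * (if i = j then (1:ℚ) else 1/2)
        = (∑ j, a j)/2 + a i / 2 := by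
      intro i
      have e : ∀ j, a j * (if i = j then (1:ℚ) else 1/2)
          = a j / 2 + (if i = j then a j / 2 else 0) := by
        intro j
        by_cases h : i = j <;> simp [h] <;> ring
      simp_rw [e, Finset.sum_add_distrib, Finset.sum_ite_eq, if_pos (mem_univ i)]
      rw [Finset.sum_div]
    have hval : q (∑ i, a i • v i) = ((∑ i, a i)^2 + ∑ i, (a i)^2)/2 := by
      rw [hB, hexp]
      simp_rw [inner, mul_add, Finset.sum_add_distrib]
      rw [← Finset.sum_mul]
      have e3 : ∀ i : Fin n, a i * (a i / 2) = (a i)^2 / 2 := fun i => by ring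
      simp_rw [e3]
      rw [← Finset.sum_div]
      ring
    have h2 := two_mul_Sfun a
    rw [hval]
    linarith
  have hli : LinearIndependent ℚ v := by
    rw [Fintype.linearIndependent_iff]
    intro g hg i
    have hS : Sfun n g = 0 := by rw [← key g, hg, map_zero]
    exact congrFun (Sfun_eq_zero g hS) i
  have hb : Fintype.card (Fin n) = Module.finrank ℚ (Fin n → ℚ) := by simp
  let b : Module.Basis (Fin n) ℚ (Fin n → ℚ) :=
    Module.Basis.mk hli (hli.span_eq_top_of_card_eq_finrank' hb).ge
  have hbv : ∀ i, b i = v i := fun i => by simp [b]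
  refine ⟨b.equivFun, fun z => ?_⟩
  have hz : z = ∑ i, b.equivFun z i • v i := by
    conv_lhs => rw [← b.sum_equivFun z]
    exact Finset.sum_congr rfl fun i _ => by rw [hbv]
  conv_lhs => rw [hz]
  exact key _
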